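/- Let ε be a 3×3 signature matrix with ε₁₂·ε₁₃·ε₂₃ = −1. Then there exists an ε-SL₂-tiling of ℤ³, and it is unique up to translation. -/

import Mathlib

namespace SL2T

def g : ℕ → ℤ
  | 0 => 1
  | 1 => 2
  | n+2 => 3 * g (n+1) - g n

lemma g_pos_mono : ∀ n, 0 < g n ∧ g n ≤ g (n+1) := by
  intro n
  induction n with
  | zero => exact ⟨by norm_num [g], by norm_num [g]⟩
  | succ n ih =>
    refine ⟨lt_of_lt_of_le ih.1 ih.2, ?_⟩
    show g (n+1) ≤ g (n+2)
    have h : g (n+2) = 3 * g (n+1) - g n := rfl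
    have := ih.1; have := ih.2
    omega

lemma g_pos (n : ℕ) : 0 < g n := (g_pos_mono n).1

lemma Hg : ∀ n, g n * g (n+2) = g (n+1)^2 + 1 := by
  intro n
  induction n with
  | zero => norm_num [g]
  | succ n ih =>
    have h2 : g (n+2) = 3 * g (n+1) - g n := rfl
    have h3 : g (n+3) = 3 * g (n+2) - g (n+1) := rfl
    linear_combination g (n+1) * h3 - g (n+2) * h2 + ih

noncomputable def f : ℤ → ℤ := fun s => g ((2*s+1).natAbs / 2)

lemma f_pos (s : ℤ) : 0 < f s := g_pos _

lemma f_symm (s : ℤ) : f (-1-s) = f s := by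
  unfold f; congr 1; omega

lemma f_eq (s : ℤ) (n : ℕ) (h : (2*s+1).natAbs / 2 = n) : f s = g n := by
  unfold f; rw [h]

lemma Hf (s : ℤ) : f s * f (s+2) = f (s+1)^2 + 1 := by
  rcases le_or_gt 0 s with hs | hs
  · rw [f_eq s s.toNat (by omega), f_eq (s+1) (s.toNat+1) (by omega),
      f_eq (s+2) (s.toNat+2) (by omega)]
    exact Hg s.toNat
  · rcases eq_or_lt_of_le (show s ≤ -1 by omega) with h1 | h1
    · rw [f_eq s 0 (by omega), f_eq (s+1) 0 (by omega), f_eq (s+2) 1 (by omega)]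
      norm_num [g]
    rcases eq_or_lt_of_le (show s ≤ -2 by omega) with h2 | h2
    · rw [f_eq s 1 (by omega), f_eq (s+1) 0 (by omega), f_eq (s+2) 0 (by omega)]
      norm_num [g]
    · set n : ℕ := (-3-s).toNat with hn
      rw [f_eq s (n+2) (by omega), f_eq (s+1) (n+1) (by omega), f_eq (s+2) n (by omega)]
      linear_combination Hg n

lemma f_rec (s : ℤ) : f (s+2) = 3 * f (s+1) - f s := by
  rcases le_or_gt 0 s with hs | hs
  · rw [f_eq s s.toNat (by omega), f_eq (s+1) (s.toNat+1) (by omega),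
      f_eq (s+2) (s.toNat+2) (by omega)]
    rfl
  · rcases eq_or_lt_of_le (show s ≤ -1 by omega) with h1 | h1
    · rw [f_eq s 0 (by omega), f_eq (s+1) 0 (by omega), f_eq (s+2) 1 (by omega)]
      norm_num [g]
    rcases eq_or_lt_of_le (show s ≤ -2 by omega) with h2 | h2
    · rw [f_eq s 1 (by omega), f_eq (s+1) 0 (by omega), f_eq (s+2) 0 (by omega)]
      norm_num [g]
    · set n : ℕ := (-3-s).toNat with hn
      rw [f_eq s (n+2) (by omega), f_eq (s+1) (n+1) (by omega), f_eq (s+2) n (by omega)]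
      have h : g (n+2) = 3 * g (n+1) - g n := rfl
      omega

lemma conic_class : ∀ N : ℕ, ∀ x y lam : ℤ, (x+y).toNat ≤ N → 0 < x → 0 < y → x ≤ y →
    x^2 + y^2 + 1 = lam * x * y → lam = 3 ∧ ∃ n : ℤ, x = f n ∧ y = f (n+1) := by
  intro N
  induction N with
  | zero => intro x y lam hN hx hy _ _; omega
  | succ N ih =>
    intro x y lam hN hx hy hxy hc
    rcases eq_or_lt_of_le hxy with heq | hlt
    · subst heq
      have hdvd : x ∣ 1 := ⟨(lam-2)*x, by linear_combination hc⟩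
      have hx1 : x = 1 := by
        rcases Int.isUnit_iff.mp (isUnit_of_dvd_one hdvd) with h | h <;> omega
      subst hx1
      have hlam : lam = 3 := by nlinarith
      refine ⟨hlam, -1, ?_, ?_⟩
      · rw [f_eq (-1) 0 (by omega)]; rfl
      · norm_num; rw [f_eq 0 0 (by omega)]; rfl
    · set y' := lam * x - y with hy'
      have hmul : y' * y = x^2 + 1 := by linear_combination -hc
      have hy'pos : 0 < y' := by nlinarith
      have hy'le : y' ≤ x := by nlinarith
      have hc' : y'^2 + x^2 + 1 = lam * y' * x := by linear_combination hc
      have hN' : (y' + x).toNat ≤ N := by omega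
      obtain ⟨hlam, n, h1, h2⟩ := ih y' x lam hN' hy'pos hx hy'le hc'
      subst hlam
      refine ⟨rfl, n+1, h2, ?_⟩
      have hfr := f_rec n
      have hyv : y = 3 * x - y' := by omega
      rw [hyv, h1, h2, show n+1+1 = n+2 by ring, hfr]

lemma two_rec_eq (F G : ℤ → ℤ) (hFr : ∀ s, F (s+2) = 3 * F (s+1) - F s)
    (hGr : ∀ s, G (s+2) = 3 * G (s+1) - G s)
    (h0 : F 0 = G 0) (h1 : F 1 = G 1) : ∀ s, F s = G s := by
  have key : ∀ s : ℤ, F s = G s ∧ F (s+1) = G (s+1) := by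
    intro s
    induction s using Int.induction_on with
    | zero => exact ⟨h0, h1⟩
    | succ i ihc =>
      obtain ⟨ha, hb⟩ := ihc
      refine ⟨hb, ?_⟩
      have hF := hFr i; have hG := hGr i
      rw [show (i:ℤ)+1+1 = i+2 by ring, hF, hG, ha, hb]
    | pred i ihc =>
      obtain ⟨ha, hb⟩ := ihc
      have hF := hFr (-(i:ℤ)-1); have hG := hGr (-(i:ℤ)-1)
      rw [show -(i:ℤ)-1+2 = -i+1 by ring, show -(i:ℤ)-1+1 = -i by ring] at hF hG
      refine ⟨?_, by rw [show -(i:ℤ)-1+1 = -i by ring]; exact ha⟩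
      omega
  exact fun s => (key s).1

lemma seq_class (F : ℤ → ℤ) (hpos : ∀ s, 0 < F s)
    (hF : ∀ s, F s * F (s+2) = F (s+1)^2 + 1) : ∃ c : ℤ, ∀ s, F s = f (s + c) := by
  have hm1 : F (-1) * F 1 = F 0 ^ 2 + 1 := by
    have := hF (-1); rw [show (-1:ℤ)+2 = 1 by ring, show (-1:ℤ)+1 = 0 by ring] at this
    exact this
  have h0 : F 0 * F 2 = F 1 ^ 2 + 1 := by
    have := hF 0; rw [show (0:ℤ)+2 = 2 by ring, show (0:ℤ)+1 = 1 by ring] at this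
    exact this
  have hcop : IsCoprime (F 1) (F 0) := ⟨F (-1), -F 0, by linear_combination hm1⟩
  have hdvd : F 1 ∣ F 0 + F 2 := by
    apply hcop.dvd_of_dvd_mul_left
    exact ⟨F (-1) + F 1, by linear_combination h0 - hm1⟩
  obtain ⟨lam, hlam0⟩ := hdvd
  have hI : ∀ s, F (s+1) * (F (s+1) + F (s+3)) = F (s+2) * (F s + F (s+2)) := by
    intro s
    have a := hF s
    have b := hF (s+1)
    rw [show s+1+2 = s+3 by ring, show s+1+1 = s+2 by ring] at b
    linear_combination b - a
  have hQ : ∀ s : ℤ, F s + F (s+2) = F (s+1) * lam := by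
    have fwd : ∀ s : ℤ, F s + F (s+2) = F (s+1) * lam →
        F (s+1) + F (s+3) = F (s+2) * lam := by
      intro s h
      have hi := hI s
      have hcan : F (s+1) * (F (s+1) + F (s+3)) = F (s+1) * (F (s+2) * lam) := by
        rw [hi, h]; ring
      exact mul_left_cancel₀ (ne_of_gt (hpos (s+1))) hcan
    have bwd : ∀ s : ℤ, F (s+1) + F (s+3) = F (s+2) * lam →
        F s + F (s+2) = F (s+1) * lam := by
      intro s h
      have hi := hI s
      have hcan : F (s+2) * (F s + F (s+2)) = F (s+2) * (F (s+1) * lam) := by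
        rw [← hi, h]; ring
      exact mul_left_cancel₀ (ne_of_gt (hpos (s+2))) hcan
    intro s
    induction s using Int.induction_on with
    | zero => rw [show (0:ℤ)+2 = 2 by ring, show (0:ℤ)+1 = 1 by ring]; exact hlam0
    | succ i ih =>
      have := fwd i ih
      rw [show (i:ℤ)+1+2 = i+3 by ring, show (i:ℤ)+1+1 = i+2 by ring]
      exact this
    | pred i ih =>
      apply bwd (-(i:ℤ)-1)
      rw [show -(i:ℤ)-1+1 = -i by ring, show -(i:ℤ)-1+3 = -i+2 by ring,
        show -(i:ℤ)-1+2 = -i+1 by ring]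
      exact ih
  have hconic : F 0 ^2 + F 1 ^2 + 1 = lam * F 0 * F 1 := by
    have q0 := hQ 0
    rw [show (0:ℤ)+2 = 2 by ring, show (0:ℤ)+1 = 1 by ring] at q0
    linear_combination F 0 * q0 - h0
  have main : ∃ c : ℤ, F 0 = f c ∧ F 1 = f (c+1) ∧ lam = 3 := by
    rcases le_or_gt (F 0) (F 1) with hle | hlt
    · obtain ⟨hlam, n, hx, hy⟩ := conic_class (F 0 + F 1).toNat (F 0) (F 1) lam le_rfl
        (hpos 0) (hpos 1) hle hconic
      exact ⟨n, hx, hy, hlam⟩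
    · obtain ⟨hlam, n, hx, hy⟩ := conic_class (F 1 + F 0).toNat (F 1) (F 0) lam le_rfl
        (hpos 1) (hpos 0) hlt.le (by linear_combination hconic)
      refine ⟨-n-2, ?_, ?_, hlam⟩
      · rw [← f_symm (-n-2), show -1-(-n-2) = n+1 by ring]; exact hy
      · rw [← f_symm (-n-2+1), show -1-(-n-2+1) = n by ring]; exact hx
  obtain ⟨c, hc0, hc1, hlam3⟩ := main
  subst hlam3
  refine ⟨c, ?_⟩
  apply two_rec_eq F (fun s => f (s + c))
  · intro s
    have := hQ s
    omega
  · intro s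
    have := f_rec (s + c)
    rw [show s+c+2 = s+2+c by ring, show s+c+1 = s+1+c by ring] at this
    exact this
  · rw [zero_add]; exact hc0
  · rw [show (1:ℤ)+c = c+1 by ring]; exact hc1

lemma nbr_eq (a : (Fin 3 → ℤ) → ℤ) (hpos : ∀ i, 0 < a i)
    (rel : ∀ (i : Fin 3 → ℤ) (k ℓ : Fin 3), k ≠ ℓ →
      a (i + Pi.single ℓ 1) * a (i + Pi.single k 1)
        - a i * a (i + Pi.single k 1 + Pi.single ℓ 1) = -1)
    (k ℓ m : Fin 3) (hkl : k ≠ ℓ) (hkm : k ≠ m) (hlm : ℓ ≠ m) (i : Fin 3 → ℤ) :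
    a (i + Pi.single k 1) = a (i + Pi.single ℓ 1) := by
  have hA := rel i k ℓ hkl
  have hB := rel i k m hkm
  have hC := rel i ℓ m hlm
  have hDk := rel (i + Pi.single k 1) ℓ m hlm
  have hDl := rel (i + Pi.single ℓ 1) k m hkm
  rw [add_right_comm i (Pi.single ℓ 1) (Pi.single k 1)] at hDl
  set x := a i with hx
  set pk := a (i + Pi.single k 1) with hpk
  set pl := a (i + Pi.single ℓ 1) with hpl
  set pm := a (i + Pi.single m 1) with hpm
  set d1 := a (i + Pi.single k 1 + Pi.single ℓ 1) with hd1
  set d2 := a (i + Pi.single k 1 + Pi.single m 1) with hd2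
  set d3 := a (i + Pi.single ℓ 1 + Pi.single m 1) with hd3
  set t := a (i + Pi.single k 1 + Pi.single ℓ 1 + Pi.single m 1) with ht
  have e4 : x^2 * (pk*t) = (pl*pk+1)*(pm*pk+1) + x^2 := by
    linear_combination (-(x^2)) * hDk - x*d2*hA - (pl*pk+1)*hB
  have e5 : x^2 * (pl*t) = (pl*pk+1)*(pm*pl+1) + x^2 := by
    linear_combination (-(x^2)) * hDl - x*d3*hA - (pl*pk+1)*hC
  have key : (pk - pl) * (x^2 + pk*pl + 1) = 0 := by
    linear_combination pl * e4 - pk * e5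
  rcases mul_eq_zero.mp key with h | h
  · linarith
  · nlinarith [hpos i, hpos (i + Pi.single k 1), hpos (i + Pi.single ℓ 1)]

lemma allminus (a : (Fin 3 → ℤ) → ℤ) (hpos : ∀ i, 0 < a i)
    (rel : ∀ (i : Fin 3 → ℤ) (k ℓ : Fin 3), k ≠ ℓ →
      a (i + Pi.single ℓ 1) * a (i + Pi.single k 1)
        - a i * a (i + Pi.single k 1 + Pi.single ℓ 1) = -1) :
    ∃ c : ℤ, ∀ i, a i = f (i 0 + i 1 + i 2 + c) := by
  have inv1 : ∀ i : Fin 3 → ℤ, a (i + (Pi.single 0 1 - Pi.single 1 1)) = a i := by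
    intro i
    have h := nbr_eq a hpos rel 0 1 2 (by decide) (by decide) (by decide) (i - Pi.single 1 1)
    rw [show i - Pi.single 1 1 + Pi.single 0 1 = i + (Pi.single 0 1 - Pi.single 1 1) by abel,
      show i - Pi.single 1 1 + Pi.single 1 1 = i by abel] at h
    exact h
  have inv2 : ∀ i : Fin 3 → ℤ, a (i + (Pi.single 0 1 - Pi.single 2 1)) = a i := by
    intro i
    have h := nbr_eq a hpos rel 0 2 1 (by decide) (by decide) (by decide) (i - Pi.single 2 1)
    rw [show i - Pi.single 2 1 + Pi.single 0 1 = i + (Pi.single 0 1 - Pi.single 2 1) by abel,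
      show i - Pi.single 2 1 + Pi.single 2 1 = i by abel] at h
    exact h
  have shift : ∀ v : Fin 3 → ℤ, (∀ i, a (i + v) = a i) → ∀ (n : ℤ) (i : Fin 3 → ℤ),
      a (i + n • v) = a i := by
    intro v hv n
    induction n using Int.induction_on with
    | zero => intro i; simp
    | succ n ih =>
      intro i
      have h1 : i + ((n:ℤ)+1) • v = (i + (n:ℤ) • v) + v := by
        rw [add_smul, one_smul]; abel
      rw [h1, hv, ih]
    | pred n ih =>
      intro i
      have h1 : i + (-(n:ℤ)) • v = (i + (-(n:ℤ)-1) • v) + v := by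
        rw [sub_smul, one_smul]; abel
      have := hv (i + (-(n:ℤ)-1) • v)
      rw [← h1, ih] at this
      rw [this]
  have hsum : ∀ i : Fin 3 → ℤ, a i = a (Pi.single 0 (i 0 + i 1 + i 2)) := by
    intro i
    have key : Pi.single 0 (i 0 + i 1 + i 2) =
        (i + (i 2) • (Pi.single 0 1 - Pi.single 2 1)) + (i 1) • (Pi.single 0 1 - Pi.single 1 1) := by
      funext j
      fin_cases j <;>
        simp [Pi.single_apply] <;> ring
    rw [key, shift _ inv1, shift _ inv2]
  set F : ℤ → ℤ := fun s => a (Pi.single 0 s) with hF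
  have hFpos : ∀ s, 0 < F s := fun s => hpos _
  have hFrel : ∀ s, F s * F (s+2) = F (s+1)^2 + 1 := by
    intro s
    have h := rel (Pi.single 0 s) 1 2 (by decide)
    have r1 := hsum (Pi.single 0 s + Pi.single 2 1)
    have r2 := hsum (Pi.single 0 s + Pi.single 1 1)
    have r3 := hsum (Pi.single 0 s + Pi.single 1 1 + Pi.single 2 1)
    rw [r1, r2, r3] at h
    simp only [Pi.add_apply, Pi.single_apply, Fin.reduceEq, reduceIte] at h
    norm_num at h
    rw [show s + 1 + 1 = s + 2 by ring] at h
    have : F (s+1) * F (s+1) - F s * F (s+2) = -1 := h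
    linarith [this]
  obtain ⟨c, hc⟩ := seq_class F hFpos hFrel
  exact ⟨c, fun i => by rw [hsum i]; exact hc _⟩

def Sg (σ : Fin 3 → ℤ) (i : Fin 3 → ℤ) : ℤ := σ 0 * i 0 + σ 1 * i 1 + σ 2 * i 2

lemma single_neg (k : Fin 3) : (Pi.single k (-1 : ℤ) : Fin 3 → ℤ) = -Pi.single k 1 := by
  funext j; by_cases h : j = k <;> simp [Pi.single_apply, h]

lemma key4 (s u v : ℤ) (hu : u = 1 ∨ u = -1) (hv : v = 1 ∨ v = -1) :
    f (s+v) * f (s+u) - f s * f (s+u+v) = -(u*v) := by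
  rcases hu with rfl | rfl <;> rcases hv with rfl | rfl
  · rw [show s+1+1 = s+2 by ring]
    linear_combination -Hf s
  · rw [show s+1+(-1:ℤ) = s by ring, show s+(-1:ℤ) = s-1 by ring]
    have h := Hf (s-1)
    rw [show s-1+2 = s+1 by ring, show s-1+1 = s by ring] at h
    linear_combination h
  · rw [show s+(-1:ℤ)+1 = s by ring, show s+(-1:ℤ) = s-1 by ring]
    have h := Hf (s-1)
    rw [show s-1+2 = s+1 by ring, show s-1+1 = s by ring] at h
    linear_combination h
  · rw [show s+(-1:ℤ)+(-1:ℤ) = s-2 by ring, show s+(-1:ℤ) = s-1 by ring]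
    have h := Hf (s-2)
    rw [show s-2+2 = s by ring, show s-2+1 = s-1 by ring] at h
    linear_combination -h

lemma signed_rel (ε : Fin 3 → Fin 3 → ℤ) (a : (Fin 3 → ℤ) → ℤ)
    (rel : ∀ (i : Fin 3 → ℤ) (k ℓ : Fin 3), k ≠ ℓ →
      a (i + Pi.single ℓ 1) * a (i + Pi.single k 1)
        - a i * a (i + Pi.single k 1 + Pi.single ℓ 1) = ε k ℓ)
    (j : Fin 3 → ℤ) (k ℓ : Fin 3) (hkl : k ≠ ℓ) (u v : ℤ)
    (hu : u = 1 ∨ u = -1) (hv : v = 1 ∨ v = -1) :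
    a (j + Pi.single ℓ v) * a (j + Pi.single k u)
      - a j * a (j + Pi.single k u + Pi.single ℓ v) = u * v * ε k ℓ := by
  rcases hu with rfl | rfl <;> rcases hv with rfl | rfl
  · have h := rel j k ℓ hkl
    linear_combination h
  · have h := rel (j + Pi.single ℓ (-1)) k ℓ hkl
    rw [show j + Pi.single ℓ (-1:ℤ) + Pi.single k 1
        = j + Pi.single k 1 + Pi.single ℓ (-1:ℤ) by abel] at h
    rw [show j + Pi.single k 1 + Pi.single ℓ (-1:ℤ) + Pi.single ℓ 1
        = j + Pi.single k 1 by rw [single_neg]; abel] at h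
    rw [show j + Pi.single ℓ (-1:ℤ) + Pi.single ℓ 1 = j by rw [single_neg]; abel] at h
    linear_combination -h
  · have h := rel (j + Pi.single k (-1)) k ℓ hkl
    rw [show j + Pi.single k (-1:ℤ) + Pi.single k 1 = j by rw [single_neg]; abel] at h
    linear_combination -h
  · have h := rel (j + Pi.single k (-1) + Pi.single ℓ (-1)) k ℓ hkl
    rw [show j + Pi.single k (-1:ℤ) + Pi.single ℓ (-1:ℤ) + Pi.single ℓ 1
        = j + Pi.single k (-1:ℤ) by rw [single_neg ℓ]; abel] at h
    rw [show j + Pi.single k (-1:ℤ) + Pi.single ℓ (-1:ℤ) + Pi.single k 1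
        = j + Pi.single ℓ (-1:ℤ) by rw [single_neg k]; abel] at h
    rw [show j + Pi.single ℓ (-1:ℤ) + Pi.single ℓ 1 = j by rw [single_neg ℓ]; abel] at h
    linear_combination h

lemma general_form (ε : Fin 3 → Fin 3 → ℤ) (σ : Fin 3 → ℤ)
    (hσpm : ∀ k, σ k = 1 ∨ σ k = -1)
    (hσε : ∀ k ℓ, k ≠ ℓ → ε k ℓ = -(σ k * σ ℓ))
    (a : (Fin 3 → ℤ) → ℤ) (hpos : ∀ i, 0 < a i)
    (rel : ∀ (i : Fin 3 → ℤ) (k ℓ : Fin 3), k ≠ ℓ →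
      a (i + Pi.single ℓ 1) * a (i + Pi.single k 1)
        - a i * a (i + Pi.single k 1 + Pi.single ℓ 1) = ε k ℓ) :
    ∃ c : ℤ, ∀ i, a i = f (Sg σ i + c) := by
  set a' : (Fin 3 → ℤ) → ℤ := fun i => a (fun j => σ j * i j) with ha'
  have τ_add : ∀ (w : Fin 3 → ℤ) (k : Fin 3) (c : ℤ),
      (fun j => σ j * ((w + Pi.single k c : Fin 3 → ℤ) j)) = (fun j => σ j * w j) + Pi.single k (σ k * c) := by
    intro w k c
    funext j
    by_cases h : j = k
    · subst h; simp [Pi.single_apply, mul_add]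
    · simp [Pi.single_apply, h]
  have rel' : ∀ (i : Fin 3 → ℤ) (k ℓ : Fin 3), k ≠ ℓ →
      a' (i + Pi.single ℓ 1) * a' (i + Pi.single k 1)
        - a' i * a' (i + Pi.single k 1 + Pi.single ℓ 1) = -1 := by
    intro i k ℓ hkl
    show a (fun j => σ j * ((i + Pi.single ℓ 1 : Fin 3 → ℤ) j)) * a (fun j => σ j * ((i + Pi.single k 1 : Fin 3 → ℤ) j))
      - a (fun j => σ j * i j) * a (fun j => σ j * ((i + Pi.single k 1 + Pi.single ℓ 1 : Fin 3 → ℤ) j)) = -1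
    rw [τ_add i ℓ 1, τ_add i k 1, τ_add (i + Pi.single k 1) ℓ 1, τ_add i k 1, mul_one, mul_one]
    have h := signed_rel ε a rel (fun j => σ j * i j) k ℓ hkl (σ k) (σ ℓ) (hσpm k) (hσpm ℓ)
    rw [hσε k ℓ hkl] at h
    have hval : σ k * σ ℓ * -(σ k * σ ℓ) = -1 := by
      rcases hσpm k with hk | hk <;> rcases hσpm ℓ with hl | hl <;> rw [hk, hl] <;> norm_num
    rw [hval] at h
    exact h
  have hpos' : ∀ i, 0 < a' i := fun i => hpos _
  obtain ⟨c, hc⟩ := allminus a' hpos' rel'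
  refine ⟨c, fun i => ?_⟩
  have hinv : (fun j => σ j * ((fun j' => σ j' * i j') j)) = i := by
    funext j
    show σ j * (σ j * i j) = i j
    rcases hσpm j with h | h <;> rw [h] <;> ring
  have h1 : a i = a' (fun j' => σ j' * i j') := by
    show a i = a (fun j => σ j * ((fun j' => σ j' * i j') j))
    rw [hinv]
  rw [h1, hc]
  show f (σ 0 * i 0 + σ 1 * i 1 + σ 2 * i 2 + c) = f (Sg σ i + c)
  rfl

theorem main (ε : Fin 3 → Fin 3 → ℤ)
    (hsym : ∀ k ℓ, ε k ℓ = ε ℓ k)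
    (hoff : ∀ k ℓ, k ≠ ℓ → ε k ℓ = 1 ∨ ε k ℓ = -1)
    (hdiag : ∀ k, ε k k = -1)
    (hcond : ε 0 1 * ε 0 2 * ε 1 2 = -1) :
    (∃ a : (Fin 3 → ℤ) → ℤ,
      (∀ i, 0 < a i) ∧
      (∀ (i : Fin 3 → ℤ) (k ℓ : Fin 3), k ≠ ℓ →
        a (i + Pi.single ℓ 1) * a (i + Pi.single k 1)
          - a i * a (i + Pi.single k 1 + Pi.single ℓ 1) = ε k ℓ)) ∧
    (∀ a b : (Fin 3 → ℤ) → ℤ,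
      (∀ i, 0 < a i) →
      (∀ (i : Fin 3 → ℤ) (k ℓ : Fin 3), k ≠ ℓ →
        a (i + Pi.single ℓ 1) * a (i + Pi.single k 1)
          - a i * a (i + Pi.single k 1 + Pi.single ℓ 1) = ε k ℓ) →
      (∀ i, 0 < b i) →
      (∀ (i : Fin 3 → ℤ) (k ℓ : Fin 3), k ≠ ℓ →
        b (i + Pi.single ℓ 1) * b (i + Pi.single k 1)
          - b i * b (i + Pi.single k 1 + Pi.single ℓ 1) = ε k ℓ) →
      ∃ t : Fin 3 → ℤ, ∀ i, b i = a (i + t)) := by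
  set σ : Fin 3 → ℤ := ![1, -ε 0 1, -ε 0 2] with hσ
  have hσ0 : σ 0 = 1 := rfl
  have hσ1 : σ 1 = -ε 0 1 := rfl
  have hσ2 : σ 2 = -ε 0 2 := rfl
  have hσpm : ∀ k, σ k = 1 ∨ σ k = -1 := by
    intro k
    fin_cases k
    · left; rfl
    · show σ 1 = 1 ∨ σ 1 = -1
      rcases hoff 0 1 (by decide) with h | h
      · right; rw [hσ1, h]
      · left; rw [hσ1, h]; ring
    · show σ 2 = 1 ∨ σ 2 = -1
      rcases hoff 0 2 (by decide) with h | h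
      · right; rw [hσ2, h]
      · left; rw [hσ2, h]; ring
  have h12 : ε 0 1 * ε 0 2 = -ε 1 2 := by
    rcases hoff 1 2 (by decide) with h | h <;> rw [h] at hcond ⊢ <;>
      first
        | linear_combination hcond
        | linear_combination -hcond
  have hσε : ∀ k ℓ, k ≠ ℓ → ε k ℓ = -(σ k * σ ℓ) := by
    have e01 : ε 0 1 = -(σ 0 * σ 1) := by rw [hσ0, hσ1]; ring
    have e02 : ε 0 2 = -(σ 0 * σ 2) := by rw [hσ0, hσ2]; ring
    have e12 : ε 1 2 = -(σ 1 * σ 2) := by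
      rw [hσ1, hσ2]; linear_combination h12
    intro k ℓ hkl
    fin_cases k <;> fin_cases ℓ
    · exact absurd rfl hkl
    · exact e01
    · exact e02
    · show ε 1 0 = -(σ 1 * σ 0); rw [hsym 1 0, e01]; ring
    · exact absurd rfl hkl
    · exact e12
    · show ε 2 0 = -(σ 2 * σ 0); rw [hsym 2 0, e02]; ring
    · show ε 2 1 = -(σ 2 * σ 1); rw [hsym 2 1, e12]; ring
    · exact absurd rfl hkl
  have hS : ∀ (i : Fin 3 → ℤ) (k : Fin 3) (c : ℤ),
      Sg σ (i + Pi.single k c) = Sg σ i + σ k * c := by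
    intro i k c
    fin_cases k <;>
      simp [Sg, Pi.single_apply, Fin.reduceEq] <;> ring
  constructor
  · refine ⟨fun i => f (Sg σ i), fun i => f_pos _, ?_⟩
    intro i k ℓ hkl
    show f (Sg σ (i + Pi.single ℓ 1)) * f (Sg σ (i + Pi.single k 1))
      - f (Sg σ i) * f (Sg σ (i + Pi.single k 1 + Pi.single ℓ 1)) = ε k ℓ
    rw [hS i ℓ 1, hS i k 1, hS (i + Pi.single k 1) ℓ 1, hS i k 1, hσε k ℓ hkl]
    simp only [mul_one]
    exact key4 (Sg σ i) (σ k) (σ ℓ) (hσpm k) (hσpm ℓ)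
  · intro a b hapos harel hbpos hbrel
    obtain ⟨ca, hca⟩ := general_form ε σ hσpm hσε a hapos harel
    obtain ⟨cb, hcb⟩ := general_form ε σ hσpm hσε b hbpos hbrel
    refine ⟨Pi.single 0 (cb - ca), fun i => ?_⟩
    have h2 := hca (i + Pi.single 0 (cb - ca))
    rw [hS i 0 (cb - ca), hσ0] at h2
    rw [hcb i, h2]
    congr 1
    ring

end SL2T

theorem sl2_tiling_Z3_exists_unique (ε : Fin 3 → Fin 3 → ℤ)
    (hsym : ∀ k ℓ, ε k ℓ = ε ℓ k)
    (hoff : ∀ k ℓ, k ≠ ℓ → ε k ℓ = 1 ∨ ε k ℓ = -1)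
    (hdiag : ∀ k, ε k k = -1)
    (hcond : ε 0 1 * ε 0 2 * ε 1 2 = -1) :
    (∃ a : (Fin 3 → ℤ) → ℤ,
      (∀ i, 0 < a i) ∧
      (∀ (i : Fin 3 → ℤ) (k ℓ : Fin 3), k ≠ ℓ →
        a (i + Pi.single ℓ 1) * a (i + Pi.single k 1)
          - a i * a (i + Pi.single k 1 + Pi.single ℓ 1) = ε k ℓ)) ∧
    (∀ a b : (Fin 3 → ℤ) → ℤ,
      (∀ i, 0 < a i) →
      (∀ (i : Fin 3 → ℤ) (k ℓ : Fin 3), k ≠ ℓ →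
        a (i + Pi.single ℓ 1) * a (i + Pi.single k 1)
          - a i * a (i + Pi.single k 1 + Pi.single ℓ 1) = ε k ℓ) →
      (∀ i, 0 < b i) →
      (∀ (i : Fin 3 → ℤ) (k ℓ : Fin 3), k ≠ ℓ →
        b (i + Pi.single ℓ 1) * b (i + Pi.single k 1)
          - b i * b (i + Pi.single k 1 + Pi.single ℓ 1) = ε k ℓ) →
      ∃ t : Fin 3 → ℤ, ∀ i, b i = a (i + t)) := by
  exact SL2T.main ε hsym hoff hdiag hcond
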